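/- (Discrete Gronwall) Let (e_n) be nonnegative reals with e₀ = 0 satisfying e_n ≤ Cτ Σ_{j=1}^{n-2} t_{n−j−1}^{−γ} e_j + C τ^{1−γ} e_{n−1} + C t_n^{−1+2ζ} τ^{3−2ζ} for all 1 ≤ n ≤ N, where t_j = jτ, γ ∈ (0,1), ζ ∈ (0, 1/2), and Nτ ≤ T. Then there is a constant C' depending only on C, γ, ζ, T such that e_n ≤ C' t_n^{−1+2ζ} τ^{3−2ζ} for all 1 ≤ n ≤ N. -/

import Mathlib

open Real Finset


lemma bern (a b α : ℝ) (ha : 0 ≤ a) (hab : a ≤ b) (hb : 0 < b)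
    (hα0 : 0 < α) (hα1 : α ≤ 1) :
    α * b ^ (α - 1) * (b - a) ≤ b ^ α - a ^ α := by
  have h := Real.geom_mean_le_arith_mean2_weighted (w₁ := α) (w₂ := 1 - α)
    (p₁ := a / b) (p₂ := 1) hα0.le (by linarith) (div_nonneg ha hb.le) zero_le_one (by ring)
  rw [Real.one_rpow, mul_one, mul_one] at h
  rw [Real.div_rpow ha hb.le] at h
  have hbα : (0:ℝ) < b ^ α := Real.rpow_pos_of_pos hb α
  have h2 : a ^ α ≤ (α * (a / b) + (1 - α)) * b ^ α := by
    rw [← div_le_iff₀ hbα]; linarith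
  have hb1 : b ^ (α - 1) * b = b ^ α := by
    rw [← Real.rpow_add_one hb.ne' (α - 1)]; ring_nf
  have hdb : a / b * b = a := div_mul_cancel₀ a hb.ne'
  calc α * b ^ (α - 1) * (b - a)
      = b ^ α - ((α * (a/b) + (1-α)) * b ^ α) := by
        rw [← hb1]; field_simp; ring
    _ ≤ b ^ α - a ^ α := by linarith


lemma sum_rpow_le (α : ℝ) (hα0 : 0 < α) (hα1 : α ≤ 1) (n : ℕ) :
    ∑ j ∈ Finset.Icc 1 n, (j : ℝ) ^ (α - 1) ≤ (n : ℝ) ^ α / α := by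
  induction n with
  | zero => simp [Real.zero_rpow hα0.ne']
  | succ m ih =>
      rw [Finset.sum_Icc_succ_top (Nat.le_add_left 1 m)]
      have hb : (0:ℝ) < (m:ℝ) + 1 := by positivity
      have h := bern (m : ℝ) ((m:ℝ)+1) α (Nat.cast_nonneg m) (by linarith) hb hα0 hα1
      have h2 : ((m:ℝ)+1) ^ (α - 1) ≤ (((m:ℝ)+1) ^ α - (m:ℝ) ^ α) / α := by
        rw [le_div_iff₀ hα0]
        calc ((m:ℝ)+1) ^ (α-1) * α = α * ((m:ℝ)+1) ^ (α-1) * (((m:ℝ)+1) - m) := by ring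
          _ ≤ _ := h
      push_cast
      calc (∑ j ∈ Finset.Icc 1 m, (j : ℝ) ^ (α - 1)) + ((m:ℝ)+1) ^ (α-1)
          ≤ (m : ℝ) ^ α / α + (((m:ℝ)+1) ^ α - (m:ℝ) ^ α) / α := by
            exact add_le_add ih h2
        _ = ((m:ℝ)+1) ^ α / α := by ring

lemma geom_aux (r : ℝ) (m : ℕ) :
    (1 - r) * ∑ k ∈ Finset.Icc 1 m, r ^ k = r - r ^ (m + 1) := by
  induction m with
  | zero => simp
  | succ m ih =>
      rw [Finset.sum_Icc_succ_top (Nat.le_add_left 1 m), mul_add, ih]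
      ring

lemma sum_exp_le (c : ℝ) (hc : 0 < c) (m : ℕ) :
    ∑ k ∈ Finset.Icc 1 m, Real.exp (-(c * k)) ≤ 1 / c := by
  have hr : ∀ k : ℕ, Real.exp (-(c * k)) = Real.exp (-c) ^ k := by
    intro k
    rw [← Real.exp_nat_mul]; ring_nf
  simp_rw [hr]
  set r := Real.exp (-c) with hrdef
  have hr0 : 0 < r := Real.exp_pos _
  have hr1 : r < 1 := Real.exp_lt_one_iff.mpr (by linarith)
  have hge : r ^ (m+1) ≥ 0 := by positivity
  have h := geom_aux r m
  have h1 : (1 - r) * ∑ k ∈ Finset.Icc 1 m, r ^ k ≤ r := by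
    rw [h]; linarith
  -- 1 - r ≥ c * r  since  e^c ≥ 1 + c  ⇒ 1/r ≥ 1 + c ⇒ 1 ≥ r + c r
  have hexp : c + 1 ≤ Real.exp c := Real.add_one_le_exp c
  have hinv : r * Real.exp c = 1 := by
    rw [hrdef, ← Real.exp_add]; simp
  have h2 : c * r ≤ 1 - r := by nlinarith
  have hs : 0 ≤ ∑ k ∈ Finset.Icc 1 m, r ^ k :=
    Finset.sum_nonneg fun k _ => by positivity
  have h3 : c * r * ∑ k ∈ Finset.Icc 1 m, r ^ k ≤ r :=
    le_trans (mul_le_mul_of_nonneg_right h2 hs) h1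
  rw [le_div_iff₀ hc]
  have := le_of_mul_le_mul_right (by nlinarith : ((∑ k ∈ Finset.Icc 1 m, r ^ k) * c) * r ≤ 1 * r) hr0
  linarith



lemma ker_sum (γ τ lam δ : ℝ) (hγ0 : 0 < γ) (hγ1 : γ < 1) (hτ : 0 < τ)
    (hlam : 0 < lam) (hδ : 0 < δ) (m : ℕ) :
    ∑ k ∈ Finset.Icc 1 m, τ * ((k:ℝ) * τ) ^ (-γ) * Real.exp (-(lam * ((k:ℝ) * τ)))
      ≤ δ ^ (1-γ) / (1-γ) + δ ^ (-γ) / lam := by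
  set A := Finset.Icc 1 m
  set f : ℕ → ℝ := fun k => τ * ((k:ℝ) * τ) ^ (-γ) * Real.exp (-(lam * ((k:ℝ) * τ))) with hf
  have hfnonneg : ∀ k : ℕ, 0 ≤ f k := by
    intro k; dsimp [f]; positivity
  rw [← Finset.sum_filter_add_sum_filter_not A (fun (k : ℕ) => (k:ℝ) * τ ≤ δ) f]
  have hτγ : ∀ k : ℕ, 1 ≤ k → τ * ((k:ℝ) * τ) ^ (-γ) = τ ^ (1-γ) * (k:ℝ) ^ ((1-γ)-1) := by
    intro k hk
    have hk0 : (0:ℝ) < (k:ℝ) := by exact_mod_cast hk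
    rw [Real.mul_rpow hk0.le hτ.le]
    rw [show (1:ℝ) - γ - 1 = -γ by ring]
    rw [show τ ^ ((1:ℝ)-γ) = τ ^ (1:ℝ) * τ ^ (-γ) by
      rw [← Real.rpow_add hτ]; ring_nf]
    rw [Real.rpow_one]; ring
  have hnear : ∑ k ∈ A.filter (fun (k : ℕ) => (k:ℝ) * τ ≤ δ), f k ≤ δ ^ (1-γ) / (1-γ) := by
    set K := ⌊δ / τ⌋₊ with hK
    have hsub : A.filter (fun (k : ℕ) => (k:ℝ) * τ ≤ δ) ⊆ Finset.Icc 1 K := by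
      intro k hk
      simp only [Finset.mem_filter, Finset.mem_Icc, A] at hk ⊢
      refine ⟨hk.1.1, Nat.le_floor ?_⟩
      rw [le_div_iff₀ hτ]; exact hk.2
    have step1 : ∀ k ∈ A.filter (fun (k : ℕ) => (k:ℝ) * τ ≤ δ),
        f k ≤ τ ^ (1-γ) * (k:ℝ) ^ ((1-γ)-1) := by
      intro k hk
      simp only [Finset.mem_filter, Finset.mem_Icc, A] at hk
      rw [hf]
      dsimp only
      rw [hτγ k hk.1.1]
      have : Real.exp (-(lam * ((k:ℝ) * τ))) ≤ 1 := by
        rw [Real.exp_le_one_iff]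
        have : (0:ℝ) ≤ (k:ℝ) * τ := by positivity
        nlinarith
      exact mul_le_of_le_one_right (by positivity) this
    calc ∑ k ∈ A.filter (fun (k : ℕ) => (k:ℝ) * τ ≤ δ), f k
        ≤ ∑ k ∈ A.filter (fun (k : ℕ) => (k:ℝ) * τ ≤ δ), τ ^ (1-γ) * (k:ℝ) ^ ((1-γ)-1) :=
          Finset.sum_le_sum step1
      _ ≤ ∑ k ∈ Finset.Icc 1 K, τ ^ (1-γ) * (k:ℝ) ^ ((1-γ)-1) := by
          apply Finset.sum_le_sum_of_subset_of_nonneg hsub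
          intro k _ _; positivity
      _ = τ ^ (1-γ) * ∑ k ∈ Finset.Icc 1 K, (k:ℝ) ^ ((1-γ)-1) := by
          rw [Finset.mul_sum]
      _ ≤ τ ^ (1-γ) * ((K:ℝ) ^ (1-γ) / (1-γ)) := by
          apply mul_le_mul_of_nonneg_left (sum_rpow_le (1-γ) (by linarith) (by linarith) K)
          positivity
      _ ≤ δ ^ (1-γ) / (1-γ) := by
          rw [mul_div_assoc']
          apply div_le_div_of_nonneg_right ?_ (by linarith)
          rw [← Real.mul_rpow hτ.le (Nat.cast_nonneg K)]
          apply Real.rpow_le_rpow (by positivity) ?_ (by linarith)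
          have : (K:ℝ) ≤ δ / τ := Nat.floor_le (by positivity)
          calc τ * (K:ℝ) ≤ τ * (δ / τ) := by nlinarith
            _ = δ := by field_simp
  have hfar : ∑ k ∈ A.filter (fun (k : ℕ) => ¬ ((k:ℝ) * τ ≤ δ)), f k ≤ δ ^ (-γ) / lam := by
    have step1 : ∀ k ∈ A.filter (fun (k : ℕ) => ¬ ((k:ℝ) * τ ≤ δ)),
        f k ≤ δ ^ (-γ) * (τ * Real.exp (-((lam * τ) * k))) := by
      intro k hk
      simp only [Finset.mem_filter, Finset.mem_Icc, A, not_le] at hk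
      have h1 : ((k:ℝ) * τ) ^ (-γ) ≤ δ ^ (-γ) :=
        Real.rpow_le_rpow_of_nonpos hδ hk.2.le (by linarith)
      have harg : lam * ((k:ℝ) * τ) = (lam * τ) * (k:ℝ) := by ring
      rw [hf]; dsimp only
      rw [harg]
      have := mul_le_mul_of_nonneg_right h1
        (show (0:ℝ) ≤ τ * Real.exp (-(lam * τ * (k:ℝ))) by positivity)
      nlinarith [this]
    calc ∑ k ∈ A.filter (fun (k : ℕ) => ¬ ((k:ℝ) * τ ≤ δ)), f k
        ≤ ∑ k ∈ A.filter (fun (k : ℕ) => ¬ ((k:ℝ) * τ ≤ δ)),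
            δ ^ (-γ) * (τ * Real.exp (-((lam * τ) * k))) := Finset.sum_le_sum step1
      _ ≤ ∑ k ∈ A, δ ^ (-γ) * (τ * Real.exp (-((lam * τ) * k))) := by
          apply Finset.sum_le_sum_of_subset_of_nonneg (Finset.filter_subset _ _)
          intro k _ _; positivity
      _ = δ ^ (-γ) * τ * ∑ k ∈ A, Real.exp (-((lam * τ) * k)) := by
          rw [Finset.mul_sum]; apply Finset.sum_congr rfl; intro k _; ring
      _ ≤ δ ^ (-γ) * τ * (1 / (lam * τ)) := by
          apply mul_le_mul_of_nonneg_left (sum_exp_le (lam * τ) (by positivity) m)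
          positivity
      _ = δ ^ (-γ) / lam := by field_simp
  linarith



lemma half_cmp (s t σ : ℝ) (hs : 0 < s) (ht : 0 < t) (hts : t ≤ 2*s)
    (hσ1 : -1 ≤ σ) (hσ0 : σ ≤ 0) : s ^ σ ≤ 2 * t ^ σ := by
  have h1 : (2*s) ^ σ ≤ t ^ σ := Real.rpow_le_rpow_of_nonpos ht hts hσ0
  have h2 : (2*s)^σ = 2^σ * s^σ := Real.mul_rpow (by norm_num) hs.le
  have h3 : (2:ℝ)^(-1:ℝ) ≤ 2^σ := Real.rpow_le_rpow_of_exponent_le one_le_two hσ1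
  have h4 : (2:ℝ)^(-1:ℝ) = 1/2 := by
    rw [show (-1:ℝ) = ((-1:ℤ):ℝ) by norm_num, Real.rpow_intCast]; norm_num
  have h5 := mul_le_mul_of_nonneg_right h3 (Real.rpow_nonneg hs.le σ)
  rw [h4] at h5
  linarith


lemma exp_neg_le_inv (y : ℝ) (hy : 0 < y) : Real.exp (-y) ≤ 1/y := by
  have h := Real.add_one_le_exp y
  rw [Real.exp_neg]
  rw [inv_le_comm₀ (Real.exp_pos y) (by positivity)]
  calc (1/y)⁻¹ = y := by field_simp
    _ ≤ Real.exp y := by linarith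

lemma tail_bound (γ lam δ x : ℝ) (hγ0 : 0<γ) (hγ1 : γ<1) (hlam : 0<lam) (hδ : 0<δ)
    (hx : 0<x) : x^(1-γ) * Real.exp (-(lam*x/2)) ≤ δ^(1-γ) + 2*δ^(-γ)/lam := by
  have hpos : (0:ℝ) ≤ 2*δ^(-γ)/lam := by positivity
  rcases le_or_gt x δ with h|h
  · have h1 : x^(1-γ) ≤ δ^(1-γ) := Real.rpow_le_rpow hx.le h (by linarith)
    have h2 : Real.exp (-(lam*x/2)) ≤ 1 := by
      rw [Real.exp_le_one_iff]
      nlinarith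
    nlinarith [Real.rpow_pos_of_pos hx (1-γ)]
  · have h2 : Real.exp (-(lam*x/2)) ≤ 1/(lam*x/2) := exp_neg_le_inv _ (by positivity)
    have h3 : x^(1-γ) = x^(-γ) * x := by
      rw [show (1:ℝ)-γ = -γ+1 by ring, Real.rpow_add hx, Real.rpow_one]
    have h4 : x^(-γ) ≤ δ^(-γ) := Real.rpow_le_rpow_of_nonpos hδ h.le (by linarith)
    have h5 : x^(1-γ) * Real.exp (-(lam*x/2)) ≤ x^(-γ) * x * (1/(lam*x/2)) := by
      rw [← h3]
      exact mul_le_mul_of_nonneg_left h2 (Real.rpow_nonneg hx.le _)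
    have h6 : x^(-γ) * x * (1/(lam*x/2)) = 2*x^(-γ)/lam := by
      field_simp
    have h7 : 2*x^(-γ)/lam ≤ 2*δ^(-γ)/lam := by
      gcongr
    nlinarith [Real.rpow_pos_of_pos hδ (1-γ)]

lemma S_est (γ ζ lam δ τ : ℝ) (hγ0 : 0<γ) (hγ1 : γ<1) (hζ0 : 0<ζ) (hζ12 : ζ<1/2)
    (hlam : 0<lam) (hδ : 0<δ) (hτ : 0<τ) (n : ℕ) (hn : 1 ≤ n) :
    ∑ j ∈ Finset.Icc 1 (n-1),
        τ * ((((n-j:ℕ)):ℝ)*τ)^(-γ)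
          * (((j:ℝ)*τ)^(-1+2*ζ) * τ^(3-2*ζ) * Real.exp (lam * ((j:ℝ)*τ)))
      ≤ (2*(δ^(1-γ)/(1-γ) + δ^(-γ)/lam) + (1/ζ)*(δ^(1-γ) + 2*δ^(-γ)/lam))
          * (((n:ℝ)*τ)^(-1+2*ζ) * τ^(3-2*ζ) * Real.exp (lam * ((n:ℝ)*τ))) := by
  have hn0 : (0:ℝ) < (n:ℝ) := by exact_mod_cast hn
  have hnτ : (0:ℝ) < (n:ℝ)*τ := by positivity
  set P : ℝ := ((n:ℝ)*τ)^(-1+2*ζ) * τ^(3-2*ζ) * Real.exp (lam * ((n:ℝ)*τ)) with hP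
  have hPpos : 0 < P := by positivity
  set g : ℕ → ℝ := fun j =>
    τ * ((((n-j:ℕ)):ℝ)*τ)^(-γ)
      * (((j:ℝ)*τ)^(-1+2*ζ) * τ^(3-2*ζ) * Real.exp (lam * ((j:ℝ)*τ))) with hg
  rw [← Finset.sum_filter_add_sum_filter_not (Finset.Icc 1 (n-1)) (fun j => 2*j < n) g]
  have hEsplit : ∀ j : ℕ, j ≤ n → Real.exp (lam * ((j:ℝ)*τ))
      = Real.exp (lam * ((n:ℝ)*τ)) * Real.exp (-(lam * ((((n-j:ℕ)):ℝ)*τ))) := by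
    intro j hj
    rw [← Real.exp_add, Nat.cast_sub hj]
    congr 1; ring
  -- far-from-diagonal part: 2*j < n
  have hfar : ∑ j ∈ (Finset.Icc 1 (n-1)).filter (fun j => 2*j < n), g j
      ≤ (1/ζ)*(δ^(1-γ) + 2*δ^(-γ)/lam) * P := by
    have step : ∀ j ∈ (Finset.Icc 1 (n-1)).filter (fun j => 2*j < n),
        g j ≤ (2 * ((n:ℝ)*τ)^(-γ) * τ^(3-2*ζ)
            * (Real.exp (lam * ((n:ℝ)*τ)) * Real.exp (-(lam * ((n:ℝ)*τ)/2))))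
            * (τ * ((j:ℝ)*τ)^(-1+2*ζ)) := by
      intro j hj
      simp only [Finset.mem_filter, Finset.mem_Icc] at hj
      obtain ⟨⟨hj1, hj2⟩, hj3⟩ := hj
      have hjn : j ≤ n := by omega
      have hj0 : (0:ℝ) < (j:ℝ) := by exact_mod_cast hj1
      have hjτ : (0:ℝ) < (j:ℝ)*τ := by positivity
      have hnj0 : (0:ℝ) < ((n-j:ℕ):ℝ) := by
        have : 1 ≤ n - j := by omega
        exact_mod_cast this
      have hker : ((((n-j:ℕ)):ℝ)*τ)^(-γ) ≤ 2 * (((n:ℝ))*τ)^(-γ) := by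
        apply half_cmp _ _ _ (by positivity) hnτ ?_ (by linarith) (by linarith)
        have : (n:ℝ) ≤ 2*((n-j:ℕ):ℝ) := by
          have : n ≤ 2*(n-j) := by omega
          exact_mod_cast this
        nlinarith
      have hexp : Real.exp (lam * ((j:ℝ)*τ))
          ≤ Real.exp (lam * ((n:ℝ)*τ)) * Real.exp (-(lam * ((n:ℝ)*τ)/2)) := by
        rw [← Real.exp_add]
        apply Real.exp_le_exp.mpr
        have hc : (2:ℝ)*(j:ℝ) ≤ (n:ℝ) := by exact_mod_cast hj3.le
        have h6 : (j:ℝ)*τ ≤ (n:ℝ)*τ/2 := by nlinarith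
        nlinarith [mul_le_mul_of_nonneg_left h6 hlam.le]
      have e1 : 0 < ((j:ℝ)*τ)^(-1+2*ζ) := Real.rpow_pos_of_pos hjτ _
      have e2 : 0 < τ^(3-2*ζ) := Real.rpow_pos_of_pos hτ _
      have e3 : 0 < ((((n-j:ℕ)):ℝ)*τ)^(-γ) := Real.rpow_pos_of_pos (by positivity) _
      have e4 : 0 < Real.exp (lam * ((j:ℝ)*τ)) := Real.exp_pos _
      rw [hg]; dsimp only
      calc τ * ((((n-j:ℕ)):ℝ)*τ)^(-γ)
            * (((j:ℝ)*τ)^(-1+2*ζ) * τ^(3-2*ζ) * Real.exp (lam * ((j:ℝ)*τ)))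
          ≤ τ * (2 * (((n:ℝ))*τ)^(-γ))
            * (((j:ℝ)*τ)^(-1+2*ζ) * τ^(3-2*ζ)
              * (Real.exp (lam * ((n:ℝ)*τ)) * Real.exp (-(lam * ((n:ℝ)*τ)/2)))) := by
            apply mul_le_mul
            · exact mul_le_mul_of_nonneg_left hker hτ.le
            · apply mul_le_mul_of_nonneg_left hexp (by positivity)
            · positivity
            · positivity
        _ = (2 * ((n:ℝ)*τ)^(-γ) * τ^(3-2*ζ)
            * (Real.exp (lam * ((n:ℝ)*τ)) * Real.exp (-(lam * ((n:ℝ)*τ)/2))))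
            * (τ * ((j:ℝ)*τ)^(-1+2*ζ)) := by ring
    calc ∑ j ∈ (Finset.Icc 1 (n-1)).filter (fun j => 2*j < n), g j
        ≤ ∑ j ∈ (Finset.Icc 1 (n-1)).filter (fun j => 2*j < n),
            (2 * ((n:ℝ)*τ)^(-γ) * τ^(3-2*ζ)
            * (Real.exp (lam * ((n:ℝ)*τ)) * Real.exp (-(lam * ((n:ℝ)*τ)/2))))
            * (τ * ((j:ℝ)*τ)^(-1+2*ζ)) := Finset.sum_le_sum step
      _ ≤ ∑ j ∈ Finset.Icc 1 n,
            (2 * ((n:ℝ)*τ)^(-γ) * τ^(3-2*ζ)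
            * (Real.exp (lam * ((n:ℝ)*τ)) * Real.exp (-(lam * ((n:ℝ)*τ)/2))))
            * (τ * ((j:ℝ)*τ)^(-1+2*ζ)) := by
          apply Finset.sum_le_sum_of_subset_of_nonneg
          · intro j hj
            simp only [Finset.mem_filter, Finset.mem_Icc] at hj ⊢
            omega
          · intro j hj _
            simp only [Finset.mem_Icc] at hj
            positivity
      _ = (2 * ((n:ℝ)*τ)^(-γ) * τ^(3-2*ζ)
            * (Real.exp (lam * ((n:ℝ)*τ)) * Real.exp (-(lam * ((n:ℝ)*τ)/2))))
            * (τ * ∑ j ∈ Finset.Icc 1 n, ((j:ℝ)*τ)^(-1+2*ζ)) := by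
          rw [Finset.mul_sum, Finset.mul_sum]
      _ ≤ (1/ζ)*(δ^(1-γ) + 2*δ^(-γ)/lam) * P := by
          have hQpos : (0:ℝ) ≤ 2 * ((n:ℝ)*τ)^(-γ) * τ^(3-2*ζ)
              * (Real.exp (lam * ((n:ℝ)*τ)) * Real.exp (-(lam * ((n:ℝ)*τ)/2))) := by
            positivity
          have hsum : ∑ j ∈ Finset.Icc 1 n, ((j:ℝ)*τ)^(-1+2*ζ)
              ≤ τ^(-1+2*ζ) * ((n:ℝ)^(2*ζ)/(2*ζ)) := by
            have hrw : ∀ j ∈ Finset.Icc 1 n, ((j:ℝ)*τ)^(-1+2*ζ)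
                = τ^(-1+2*ζ) * (j:ℝ)^(2*ζ-1) := by
              intro j hj
              simp only [Finset.mem_Icc] at hj
              rw [Real.mul_rpow (by positivity) hτ.le,
                show (-1+2*ζ) = 2*ζ-1 by ring]
              ring
            rw [Finset.sum_congr rfl hrw, ← Finset.mul_sum]
            apply mul_le_mul_of_nonneg_left
              (sum_rpow_le (2*ζ) (by linarith) (by linarith) n)
              (Real.rpow_nonneg hτ.le _)
          have hA1 : τ * τ^(-1+2*ζ) = τ^(2*ζ) := by
            have h := Real.rpow_add hτ 1 (-1+2*ζ)
            rw [Real.rpow_one] at h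
            rw [← h]
            congr 1
            ring
          have hA2 : (n:ℝ)^(2*ζ) * τ^(2*ζ) = ((n:ℝ)*τ)^(2*ζ) :=
            (Real.mul_rpow hn0.le hτ.le).symm
          have hA3 : ((n:ℝ)*τ)^(-γ) * ((n:ℝ)*τ)^(2*ζ)
              = ((n:ℝ)*τ)^(-1+2*ζ) * ((n:ℝ)*τ)^(1-γ) := by
            rw [← Real.rpow_add hnτ, ← Real.rpow_add hnτ]
            ring_nf
          have hkey : (2 * ((n:ℝ)*τ)^(-γ) * τ^(3-2*ζ)
              * (Real.exp (lam * ((n:ℝ)*τ)) * Real.exp (-(lam * ((n:ℝ)*τ)/2))))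
              * (τ * (τ^(-1+2*ζ) * ((n:ℝ)^(2*ζ)/(2*ζ))))
              = (1/ζ) * (((n:ℝ)*τ)^(1-γ) * Real.exp (-(lam*((n:ℝ)*τ)/2))) * P := by
            rw [hP]
            rw [show (2 * ((n:ℝ)*τ)^(-γ) * τ^(3-2*ζ)
              * (Real.exp (lam * ((n:ℝ)*τ)) * Real.exp (-(lam * ((n:ℝ)*τ)/2))))
              * (τ * (τ^(-1+2*ζ) * ((n:ℝ)^(2*ζ)/(2*ζ))))
              = (((n:ℝ)*τ)^(-γ) * ((n:ℝ)^(2*ζ) * (τ * τ^(-1+2*ζ))))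
                * (τ^(3-2*ζ) * Real.exp (lam * ((n:ℝ)*τ))
                  * Real.exp (-(lam * ((n:ℝ)*τ)/2)) * (2/(2*ζ))) by ring]
            rw [hA1, hA2, hA3, show (2:ℝ)/(2*ζ) = 1/ζ by
              rw [div_eq_div_iff (by linarith) (by linarith)]; ring]
            ring
          calc (2 * ((n:ℝ)*τ)^(-γ) * τ^(3-2*ζ)
              * (Real.exp (lam * ((n:ℝ)*τ)) * Real.exp (-(lam * ((n:ℝ)*τ)/2))))
              * (τ * ∑ j ∈ Finset.Icc 1 n, ((j:ℝ)*τ)^(-1+2*ζ))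
              ≤ (2 * ((n:ℝ)*τ)^(-γ) * τ^(3-2*ζ)
              * (Real.exp (lam * ((n:ℝ)*τ)) * Real.exp (-(lam * ((n:ℝ)*τ)/2))))
              * (τ * (τ^(-1+2*ζ) * ((n:ℝ)^(2*ζ)/(2*ζ)))) := by
                apply mul_le_mul_of_nonneg_left ?_ hQpos
                exact mul_le_mul_of_nonneg_left hsum hτ.le
            _ = (1/ζ) * (((n:ℝ)*τ)^(1-γ) * Real.exp (-(lam*((n:ℝ)*τ)/2))) * P := hkey
            _ ≤ (1/ζ)*(δ^(1-γ) + 2*δ^(-γ)/lam) * P := by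
                apply mul_le_mul_of_nonneg_right ?_ hPpos.le
                apply mul_le_mul_of_nonneg_left
                  (tail_bound γ lam δ ((n:ℝ)*τ) hγ0 hγ1 hlam hδ hnτ)
                  (by positivity)
  -- near-diagonal part: 2*j ≥ n
  have hnear : ∑ j ∈ (Finset.Icc 1 (n-1)).filter (fun j => ¬ 2*j < n), g j
      ≤ 2*(δ^(1-γ)/(1-γ) + δ^(-γ)/lam) * P := by
    set φ : ℕ → ℝ := fun k => τ * ((k:ℝ) * τ) ^ (-γ) * Real.exp (-(lam * ((k:ℝ) * τ))) with hφ
    have hφ0 : ∀ k, 0 ≤ φ k := fun k => by dsimp [φ]; positivity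
    have step : ∀ j ∈ (Finset.Icc 1 (n-1)).filter (fun j => ¬ 2*j < n),
        g j ≤ 2 * P * φ (n - j) := by
      intro j hj
      simp only [Finset.mem_filter, Finset.mem_Icc, not_lt] at hj
      obtain ⟨⟨hj1, hj2⟩, hj3⟩ := hj
      have hjn : j ≤ n := by omega
      have hj0 : (0:ℝ) < (j:ℝ) := by exact_mod_cast hj1
      have hjτ : (0:ℝ) < (j:ℝ)*τ := by positivity
      have hnj0 : (0:ℝ) < ((n-j:ℕ):ℝ) := by
        have : 1 ≤ n - j := by omega
        exact_mod_cast this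
      have hb : ((j:ℝ)*τ)^(-1+2*ζ) ≤ 2 * (((n:ℝ))*τ)^(-1+2*ζ) := by
        apply half_cmp _ _ _ hjτ hnτ ?_ (by linarith) (by linarith)
        have : (n:ℝ) ≤ 2*(j:ℝ) := by exact_mod_cast hj3
        nlinarith
      rw [hg]; dsimp only
      rw [hEsplit j hjn]
      have e2 : 0 < τ^(3-2*ζ) := Real.rpow_pos_of_pos hτ _
      have e3 : 0 < ((((n-j:ℕ)):ℝ)*τ)^(-γ) := Real.rpow_pos_of_pos (by positivity) _
      have e5 : 0 < Real.exp (-(lam * ((((n-j:ℕ)):ℝ)*τ))) := Real.exp_pos _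
      have e6 : 0 < Real.exp (lam * ((n:ℝ)*τ)) := Real.exp_pos _
      calc τ * ((((n-j:ℕ)):ℝ)*τ)^(-γ)
            * (((j:ℝ)*τ)^(-1+2*ζ) * τ^(3-2*ζ)
              * (Real.exp (lam * ((n:ℝ)*τ)) * Real.exp (-(lam * ((((n-j:ℕ)):ℝ)*τ)))))
          ≤ τ * ((((n-j:ℕ)):ℝ)*τ)^(-γ)
            * ((2 * (((n:ℝ))*τ)^(-1+2*ζ)) * τ^(3-2*ζ)
              * (Real.exp (lam * ((n:ℝ)*τ)) * Real.exp (-(lam * ((((n-j:ℕ)):ℝ)*τ))))) := by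
            apply mul_le_mul_of_nonneg_left ?_ (by positivity)
            apply mul_le_mul_of_nonneg_right ?_ (by positivity)
            exact mul_le_mul_of_nonneg_right hb e2.le
        _ = 2 * P * φ (n - j) := by rw [hP, hφ]; dsimp only; ring
    calc ∑ j ∈ (Finset.Icc 1 (n-1)).filter (fun j => ¬ 2*j < n), g j
        ≤ ∑ j ∈ (Finset.Icc 1 (n-1)).filter (fun j => ¬ 2*j < n), 2 * P * φ (n - j) :=
          Finset.sum_le_sum step
      _ = ∑ k ∈ ((Finset.Icc 1 (n-1)).filter (fun j => ¬ 2*j < n)).image (fun j => n - j),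
            2 * P * φ k := by
          rw [Finset.sum_image]
          intro x hx y hy hxy
          simp only [Finset.coe_filter, Finset.mem_coe, Finset.mem_filter, Finset.mem_Icc, Set.mem_setOf_eq] at hx hy hxy
          omega
      _ ≤ ∑ k ∈ Finset.Icc 1 (n-1), 2 * P * φ k := by
          apply Finset.sum_le_sum_of_subset_of_nonneg
          · intro k hk
            simp only [Finset.mem_image, Finset.mem_filter, Finset.mem_Icc] at hk ⊢
            obtain ⟨j, hj, rfl⟩ := hk
            omega
          · intro k _ _; positivity
      _ = 2 * P * ∑ k ∈ Finset.Icc 1 (n-1), φ k := by rw [Finset.mul_sum]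
      _ ≤ 2 * P * (δ^(1-γ)/(1-γ) + δ^(-γ)/lam) := by
          apply mul_le_mul_of_nonneg_left (ker_sum γ τ lam δ hγ0 hγ1 hτ hlam hδ (n-1))
          positivity
      _ = 2*(δ^(1-γ)/(1-γ) + δ^(-γ)/lam) * P := by ring
  linarith



set_option maxHeartbeats 2000000 in
theorem discrete_gronwall_weakly_singular
    (C γ ζ T : ℝ) (hC : 0 < C) (hγ : γ ∈ Set.Ioo (0:ℝ) 1)
    (hζ : ζ ∈ Set.Ioo (0:ℝ) (1/2)) (hT : 0 < T) :
    ∃ C' > 0, ∀ (τ : ℝ) (N : ℕ) (e : ℕ → ℝ), 0 < τ → (N : ℝ) * τ ≤ T →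
      (∀ n, 0 ≤ e n) → e 0 = 0 →
      (∀ n, 1 ≤ n → n ≤ N →
        e n ≤ C * τ * ∑ j ∈ Finset.Icc 1 (n - 2),
                (((n - j - 1 : ℕ) : ℝ) * τ) ^ (-γ) * e j
              + C * τ ^ (1 - γ) * e (n - 1)
              + C * ((n : ℝ) * τ) ^ (-1 + 2 * ζ) * τ ^ (3 - 2 * ζ)) →
      ∀ n, 1 ≤ n → n ≤ N → e n ≤ C' * ((n : ℝ) * τ) ^ (-1 + 2 * ζ) * τ ^ (3 - 2 * ζ) := by
  obtain ⟨hγ0, hγ1⟩ := hγ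
  obtain ⟨hζ0, hζ12⟩ := hζ
  set B₁ : ℝ := 2/(1-γ) + 1/ζ with hB₁
  have hB₁pos : 0 < B₁ := by
    have a1 : 0 < 2/(1-γ) := div_pos two_pos (by linarith)
    have a2 : 0 < 1/ζ := by positivity
    rw [hB₁]; linarith
  set δ : ℝ := ((8*C*B₁)⁻¹) ^ ((1-γ)⁻¹) with hδdef
  have hδ : 0 < δ := Real.rpow_pos_of_pos (by positivity) _
  have hu : δ ^ (1-γ) = (8*C*B₁)⁻¹ := by
    rw [hδdef, ← Real.rpow_mul (by positivity), inv_mul_cancel₀ (by linarith), Real.rpow_one]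
  set v : ℝ := δ ^ (-γ) with hv
  have hvpos : 0 < v := Real.rpow_pos_of_pos hδ _
  set lam : ℝ := 8*C*(2+2/ζ)*v with hlamdef
  have hlam : 0 < lam := by
    have h2ζ : 0 < 2 + 2/ζ := by positivity
    rw [hlamdef]; positivity
  have h22 : (0:ℝ) < 2 + 2/ζ := by positivity
  clear_value B₁ δ v lam
  have heps : 2*(δ^(1-γ)/(1-γ) + δ^(-γ)/lam) + (1/ζ)*(δ^(1-γ) + 2*δ^(-γ)/lam) = 1/(4*C) := by
    have e1 : δ^(1-γ) * B₁ = 1/(8*C) := by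
      rw [hu]
      field_simp
    have e2 : 2*v/lam + 2*v/(ζ*lam) = 1/(8*C) := by
      rw [hlamdef, show (2:ℝ)+2/ζ = (2*ζ+2)/ζ from by field_simp]
      have hz : ζ ≠ 0 := hζ0.ne'
      have hv0 : v ≠ 0 := hvpos.ne'
      have hC0 : C ≠ 0 := hC.ne'
      have h2z : (2*ζ+2) ≠ 0 := by positivity
      field_simp
    calc 2*(δ^(1-γ)/(1-γ) + δ^(-γ)/lam) + (1/ζ)*(δ^(1-γ) + 2*δ^(-γ)/lam)
        = δ^(1-γ)*B₁ + (2*v/lam + 2*v/(ζ*lam)) := by rw [hB₁, ← hv]; ring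
      _ = 1/(8*C) + 1/(8*C) := by rw [e1, e2]
      _ = 1/(4*C) := by ring
  clear hB₁ hδdef hv hlamdef hu
  refine ⟨2*C*Real.exp (lam*T), by positivity, ?_⟩
  intro τ N e hτ hNT hge he0 hrec
  have key : ∀ n, n ≤ N → 1 ≤ n →
      e n ≤ 2*C * (((n:ℝ)*τ)^(-1+2*ζ) * τ^(3-2*ζ) * Real.exp (lam * ((n:ℝ)*τ))) := by
    intro n
    induction n using Nat.strong_induction_on with
    | _ n IH =>
      intro hnN hn1
      have hrecn := hrec n hn1 hnN
      have hn0 : (0:ℝ) < (n:ℝ) := by exact_mod_cast hn1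
      have hnτ : (0:ℝ) < (n:ℝ)*τ := by positivity
      have hX : (0:ℝ) < ((n:ℝ)*τ)^(-1+2*ζ) := Real.rpow_pos_of_pos hnτ _
      have hY : (0:ℝ) < τ^(3-2*ζ) := Real.rpow_pos_of_pos hτ _
      have hZ1 : (1:ℝ) ≤ Real.exp (lam * ((n:ℝ)*τ)) := by
        rw [Real.one_le_exp_iff]
        positivity
      rcases eq_or_lt_of_le hn1 with h1 | hn2
      · -- n = 1
        subst h1
        rw [show Finset.Icc 1 ((1:ℕ)-2) = (∅ : Finset ℕ) from Finset.Icc_eq_empty (by omega),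
          show (1:ℕ)-1 = 0 from rfl, he0] at hrecn
        simp only [Finset.sum_empty, mul_zero, zero_add, add_zero] at hrecn
        nlinarith [mul_nonneg (mul_nonneg hC.le hX.le) hY.le,
          mul_nonneg (mul_nonneg (mul_nonneg hC.le hX.le) hY.le) (sub_nonneg.mpr hZ1)]
      · -- n ≥ 2
        have hn2' : 2 ≤ n := hn2
        set F : ℕ → ℝ := fun j => 2*(C*(2*C)) * (τ * ((((n-j:ℕ)):ℝ)*τ)^(-γ)
          * (((j:ℝ)*τ)^(-1+2*ζ) * τ^(3-2*ζ) * Real.exp (lam * ((j:ℝ)*τ)))) with hF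
      -- step s1
        have s1 : C * τ * ∑ j ∈ Finset.Icc 1 (n - 2), (((n - j - 1 : ℕ) : ℝ) * τ) ^ (-γ) * e j
            ≤ ∑ j ∈ Finset.Icc 1 (n-2), F j := by
          rw [Finset.mul_sum]
          apply Finset.sum_le_sum
          intro j hj
          simp only [Finset.mem_Icc] at hj
          obtain ⟨hj1, hj2⟩ := hj
          have hjlt : j < n := by omega
          have hjN : j ≤ N := by omega
          have hIH := IH j hjlt hjN hj1
          have hj0 : (0:ℝ) < (j:ℝ) := by exact_mod_cast hj1
          have hnj1 : 1 ≤ n - j - 1 := by omega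
          have hnj1R : (1:ℝ) ≤ ((n-j-1:ℕ):ℝ) := by exact_mod_cast hnj1
          have hcast : ((n-j:ℕ):ℝ) = ((n-j-1:ℕ):ℝ) + 1 := by
            have : n - j = (n - j - 1) + 1 := by omega
            rw [this]; push_cast; ring
          have hs1 : (0:ℝ) < ((n-j-1:ℕ):ℝ)*τ := mul_pos (by linarith) hτ
          have hs2 : (0:ℝ) < ((n-j:ℕ):ℝ)*τ := by rw [hcast]; positivity
          have hts : ((n-j:ℕ):ℝ)*τ ≤ 2*(((n-j-1:ℕ):ℝ)*τ) := by rw [hcast]; nlinarith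
          have hker : (((n-j-1:ℕ):ℝ)*τ)^(-γ) ≤ 2 * ((((n-j:ℕ)):ℝ)*τ)^(-γ) :=
            half_cmp _ _ _ hs1 hs2 hts (by linarith) (by linarith)
          have hkerpos : (0:ℝ) < (((n-j-1:ℕ):ℝ)*τ)^(-γ) :=
            Real.rpow_pos_of_pos hs1 _
          have hker2pos : (0:ℝ) < ((((n-j:ℕ)):ℝ)*τ)^(-γ) :=
            Real.rpow_pos_of_pos hs2 _
          have hbE : (0:ℝ) < ((j:ℝ)*τ)^(-1+2*ζ) * τ^(3-2*ζ) * Real.exp (lam * ((j:ℝ)*τ)) := by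
            have := Real.rpow_pos_of_pos (show (0:ℝ) < (j:ℝ)*τ by positivity) (-1+2*ζ)
            positivity
          rw [hF]
          dsimp only
          calc C * τ * ((((n-j-1:ℕ):ℝ)*τ)^(-γ) * e j)
              ≤ C * τ * ((2 * ((((n-j:ℕ)):ℝ)*τ)^(-γ))
                * (2*C * (((j:ℝ)*τ)^(-1+2*ζ) * τ^(3-2*ζ) * Real.exp (lam * ((j:ℝ)*τ))))) := by
                apply mul_le_mul_of_nonneg_left ?_ (by positivity)
                apply mul_le_mul hker hIH (hge j) (by positivity)
            _ = 2*(C*(2*C)) * (τ * ((((n-j:ℕ)):ℝ)*τ)^(-γ)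
                * (((j:ℝ)*τ)^(-1+2*ζ) * τ^(3-2*ζ) * Real.exp (lam * ((j:ℝ)*τ)))) := by ring
      -- step s2
        have s2 : C * τ^(1-γ) * e (n-1) ≤ F (n-1) := by
          have hIH := IH (n-1) (by omega) (by omega) (by omega)
          have hcast1 : ((n-(n-1):ℕ):ℝ) = 1 := by
            have : n - (n-1) = 1 := by omega
            rw [this]; norm_num
          have hn10 : (0:ℝ) < ((n-1:ℕ):ℝ) := by
            have : 1 ≤ n - 1 := by omega
            exact_mod_cast this
          have hτγ : τ^(1-γ) = τ * ((((n-(n-1):ℕ)):ℝ)*τ)^(-γ) := by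
            rw [hcast1, one_mul]
            have h := Real.rpow_add hτ 1 (-γ)
            rw [Real.rpow_one] at h
            rw [← h]
            ring_nf
          rw [hF]; dsimp only
          rw [hτγ]
          have hbE : (0:ℝ) < (((n-1:ℕ):ℝ)*τ)^(-1+2*ζ) * τ^(3-2*ζ)
              * Real.exp (lam * (((n-1:ℕ):ℝ)*τ)) := by
            have := Real.rpow_pos_of_pos (show (0:ℝ) < ((n-1:ℕ):ℝ)*τ by positivity) (-1+2*ζ)
            positivity
          have hkpos : (0:ℝ) < ((((n-(n-1):ℕ)):ℝ)*τ)^(-γ) := by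
            rw [hcast1, one_mul]
            exact Real.rpow_pos_of_pos hτ _
          calc C * (τ * ((((n-(n-1):ℕ)):ℝ)*τ)^(-γ)) * e (n-1)
              ≤ C * (τ * ((((n-(n-1):ℕ)):ℝ)*τ)^(-γ))
                * (2*C * ((((n-1:ℕ):ℝ)*τ)^(-1+2*ζ) * τ^(3-2*ζ)
                  * Real.exp (lam * (((n-1:ℕ):ℝ)*τ)))) := by
                apply mul_le_mul_of_nonneg_left hIH (by positivity)
            _ ≤ 2*(C*(2*C)) * (τ * ((((n-(n-1):ℕ)):ℝ)*τ)^(-γ)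
                * ((((n-1:ℕ):ℝ)*τ)^(-1+2*ζ) * τ^(3-2*ζ)
                  * Real.exp (lam * (((n-1:ℕ):ℝ)*τ)))) := by
                nlinarith [mul_nonneg (mul_nonneg (mul_nonneg (mul_nonneg hC.le hC.le) hτ.le)
                  hkpos.le) hbE.le]
      -- step s3
        have s3 : (∑ j ∈ Finset.Icc 1 (n-2), F j) + F (n-1) = ∑ j ∈ Finset.Icc 1 (n-1), F j := by
          have h : n - 1 = (n-2)+1 := by omega
          rw [h, Finset.sum_Icc_succ_top (by omega : 1 ≤ (n-2)+1)]
      -- step s4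
        have s4 : ∑ j ∈ Finset.Icc 1 (n-1), F j
            ≤ 2*(C*(2*C)) * ((1/(4*C)) * (((n:ℝ)*τ)^(-1+2*ζ) * τ^(3-2*ζ)
              * Real.exp (lam * ((n:ℝ)*τ)))) := by
          have hS := S_est γ ζ lam δ τ hγ0 hγ1 hζ0 hζ12 hlam hδ hτ n hn1
          rw [heps] at hS
          calc ∑ j ∈ Finset.Icc 1 (n-1), F j
              = 2*(C*(2*C)) * ∑ j ∈ Finset.Icc 1 (n-1), (τ * ((((n-j:ℕ)):ℝ)*τ)^(-γ)
                * (((j:ℝ)*τ)^(-1+2*ζ) * τ^(3-2*ζ) * Real.exp (lam * ((j:ℝ)*τ)))) := by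
                rw [Finset.mul_sum]
            _ ≤ 2*(C*(2*C)) * ((1/(4*C)) * (((n:ℝ)*τ)^(-1+2*ζ) * τ^(3-2*ζ)
                * Real.exp (lam * ((n:ℝ)*τ)))) := by
                apply mul_le_mul_of_nonneg_left hS (by positivity)
        have hfin : 2*(C*(2*C)) * ((1/(4*C)) * (((n:ℝ)*τ)^(-1+2*ζ) * τ^(3-2*ζ)
              * Real.exp (lam * ((n:ℝ)*τ))))
            = C * (((n:ℝ)*τ)^(-1+2*ζ) * τ^(3-2*ζ) * Real.exp (lam * ((n:ℝ)*τ))) := by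
          field_simp
          ring
        have hCb : C * ((n:ℝ)*τ)^(-1+2*ζ) * τ^(3-2*ζ)
            ≤ C * (((n:ℝ)*τ)^(-1+2*ζ) * τ^(3-2*ζ) * Real.exp (lam * ((n:ℝ)*τ))) := by
          nlinarith [mul_nonneg (mul_nonneg hC.le hX.le) hY.le,
            mul_nonneg (mul_nonneg (mul_nonneg hC.le hX.le) hY.le) (sub_nonneg.mpr hZ1)]
        have hfin2 : 2*(C*(2*C)) * ((1/(4*C)) * (((n:ℝ)*τ)^(-1+2*ζ) * τ^(3-2*ζ)
              * Real.exp (lam * ((n:ℝ)*τ))))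
            ≤ C * (((n:ℝ)*τ)^(-1+2*ζ) * τ^(3-2*ζ) * Real.exp (lam * ((n:ℝ)*τ))) :=
          le_of_eq hfin
        linarith [hrecn, s1, s2, s3, s4, hfin2, hCb]
  intro n hn1 hnN
  have hk := key n hnN hn1
  have hn0 : (0:ℝ) < (n:ℝ) := by exact_mod_cast hn1
  have hnτ : (0:ℝ) < (n:ℝ)*τ := by positivity
  have hX : (0:ℝ) < ((n:ℝ)*τ)^(-1+2*ζ) := Real.rpow_pos_of_pos hnτ _
  have hY : (0:ℝ) < τ^(3-2*ζ) := Real.rpow_pos_of_pos hτ _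
  have hexp : Real.exp (lam * ((n:ℝ)*τ)) ≤ Real.exp (lam*T) := by
    apply Real.exp_le_exp.mpr
    have h1 : (n:ℝ)*τ ≤ (N:ℝ)*τ := by
      have : (n:ℝ) ≤ (N:ℝ) := by exact_mod_cast hnN
      nlinarith
    nlinarith [mul_nonneg hlam.le (by linarith : (0:ℝ) ≤ T - (n:ℝ)*τ)]
  calc e n ≤ 2*C * (((n:ℝ)*τ)^(-1+2*ζ) * τ^(3-2*ζ) * Real.exp (lam * ((n:ℝ)*τ))) := hk
    _ ≤ 2*C * (((n:ℝ)*τ)^(-1+2*ζ) * τ^(3-2*ζ) * Real.exp (lam*T)) := by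
        apply mul_le_mul_of_nonneg_left ?_ (by positivity)
        exact mul_le_mul_of_nonneg_left hexp (by positivity)
    _ = 2*C*Real.exp (lam*T) * ((n:ℝ)*τ)^(-1+2*ζ) * τ^(3-2*ζ) := by ring
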